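/- Let k > 1 and λ > 0, and let f_{k,λ}(x) = (1/2) e^{-(x+λ)/2} (x/λ)^{k/4 - 1/2} I_{k/2-1}(sqrt(λx)) for x > 0 be the PDF of the noncentral chi-squared distribution. Then for all x > 0: (1/2^{k/2}) e^{-(x+λ)/2} x^{k/2-1} / Γ(k/2) ≤ f_{k,λ}(x) ≤ (1/2^{k/2}) e^{-x/4 + λ/2} x^{k/2-1} / Γ(k/2). -/

import Mathlib

open Real MeasureTheory Set Filter

/-- Modified Bessel function of the first kind of order `ν`. -/
noncomputable def besselI (ν x : ℝ) : ℝ :=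
  ∑' m : ℕ, (1 / ((m.factorial : ℝ) * Real.Gamma ((m : ℝ) + ν + 1))) *
    (x / 2) ^ (2 * (m : ℝ) + ν)

/-- PDF of the noncentral chi-squared distribution with `k` degrees of freedom and
noncentrality parameter `lam`, for `x > 0`. -/
noncomputable def ncChiSqPDF (k lam x : ℝ) : ℝ :=
  (1 / 2) * Real.exp (-(x + lam) / 2) * (x / lam) ^ (k / 4 - 1 / 2) *
    besselI (k / 2 - 1) (Real.sqrt (lam * x))

/-- PDF of the central chi-squared distribution with `k` degrees of freedom, for `x > 0`. -/
noncomputable def chiSqPDF (k x : ℝ) : ℝ :=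
  x ^ (k / 2 - 1) * Real.exp (-x / 2) / (2 ^ (k / 2) * Real.Gamma (k / 2))

lemma real_exp_eq_tsum (y : ℝ) : Real.exp y = ∑' n : ℕ, y ^ n / n.factorial := by
  rw [Real.exp_eq_exp_ℝ, NormedSpace.exp_eq_tsum ℝ]
  exact tsum_congr fun n => by rw [smul_eq_mul]; field_simp

lemma gamma_fact_bound (ν : ℝ) (hν : -(1/2) ≤ ν) (m : ℕ) :
    Real.Gamma (ν + 1) * ((2*m).factorial / (4^m * m.factorial)) ≤
      Real.Gamma ((m : ℝ) + ν + 1) := by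
  induction m with
  | zero => simp
  | succ n ih =>
    have h1 : (0:ℝ) < (n:ℝ) + ν + 1 := by
      have : (0:ℝ) ≤ n := Nat.cast_nonneg n
      linarith
    have hG : 0 < Real.Gamma ((n:ℝ) + ν + 1) := Real.Gamma_pos_of_pos h1
    have hrec : Real.Gamma ((↑(n+1):ℝ) + ν + 1) = ((n:ℝ)+ν+1) * Real.Gamma ((n:ℝ)+ν+1) := by
      rw [show ((n+1:ℕ):ℝ) + ν + 1 = ((n:ℝ)+ν+1) + 1 by push_cast; ring,
        Real.Gamma_add_one h1.ne']
    have hfac : ((2*(n+1)).factorial : ℝ) / (4^(n+1) * (n+1).factorial)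
        = ((2*n).factorial / (4^n * n.factorial)) * ((n:ℝ) + 1/2) := by
      have : 2*(n+1) = (2*n) + 1 + 1 := by ring
      rw [this, Nat.factorial_succ, Nat.factorial_succ, Nat.factorial_succ]
      push_cast
      have h4 : (4:ℝ)^(n+1) ≠ 0 := by positivity
      have hf : ((2*n).factorial : ℝ) ≠ 0 := Nat.cast_ne_zero.2 (Nat.factorial_ne_zero _)
      field_simp
      ring
    rw [hrec, hfac, ← mul_assoc]
    have hstep : (n:ℝ) + 1/2 ≤ (n:ℝ) + ν + 1 := by linarith
    calc Real.Gamma (ν+1) * ((2*n).factorial / (4^n * n.factorial)) * ((n:ℝ) + 1/2)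
        ≤ Real.Gamma ((n:ℝ)+ν+1) * ((n:ℝ) + 1/2) := by
          apply mul_le_mul_of_nonneg_right ih; positivity
      _ ≤ Real.Gamma ((n:ℝ)+ν+1) * ((n:ℝ)+ν+1) := by
          apply mul_le_mul_of_nonneg_left hstep hG.le
      _ = ((n:ℝ)+ν+1) * Real.Gamma ((n:ℝ)+ν+1) := mul_comm _ _

lemma bessel_term_eq (ν y : ℝ) (hy : 0 < y) (m : ℕ) :
    (1 / ((m.factorial : ℝ) * Real.Gamma ((m : ℝ) + ν + 1))) * (y / 2) ^ (2 * (m : ℝ) + ν)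
    = (y^(2*m) / (4^m * m.factorial * Real.Gamma ((m : ℝ) + ν + 1))) * (y/2) ^ ν := by
  have hy2 : (0:ℝ) < y / 2 := by linarith
  rw [Real.rpow_add hy2, show (2*(m:ℝ)) = ((2*m : ℕ):ℝ) by push_cast; ring,
    Real.rpow_natCast]
  have : (y/2)^(2*m) = y^(2*m) / 4^m := by
    rw [div_pow, pow_mul y, pow_mul 2]; norm_num
  rw [this]; ring

lemma besselI_pos_terms (ν y : ℝ) (hν : -(1/2) ≤ ν) (hy : 0 < y) (m : ℕ) :
    0 ≤ (1 / ((m.factorial : ℝ) * Real.Gamma ((m : ℝ) + ν + 1))) *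
      (y / 2) ^ (2 * (m : ℝ) + ν) := by
  have h1 : (0:ℝ) < (m:ℝ) + ν + 1 := by
    have : (0:ℝ) ≤ m := Nat.cast_nonneg m
    linarith
  have hG := Real.Gamma_pos_of_pos h1
  have hf : (0:ℝ) < m.factorial := Nat.cast_pos.2 m.factorial_pos
  have : (0:ℝ) < (y/2) ^ (2*(m:ℝ)+ν) := Real.rpow_pos_of_pos (by linarith) _
  positivity

lemma bessel_term_le (ν y : ℝ) (hν : -(1/2) ≤ ν) (hy : 0 < y) (m : ℕ) :
    (1 / ((m.factorial : ℝ) * Real.Gamma ((m : ℝ) + ν + 1))) * (y / 2) ^ (2 * (m : ℝ) + ν)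
    ≤ ((y/2) ^ ν / Real.Gamma (ν+1)) * (y^(2*m) / (2*m).factorial) := by
  have h1 : (0:ℝ) < (m:ℝ) + ν + 1 := by
    have : (0:ℝ) ≤ m := Nat.cast_nonneg m; linarith
  have hG := Real.Gamma_pos_of_pos h1
  have hGν : 0 < Real.Gamma (ν+1) := Real.Gamma_pos_of_pos (by linarith)
  have hf : (0:ℝ) < m.factorial := Nat.cast_pos.2 m.factorial_pos
  have hf2 : (0:ℝ) < (2*m).factorial := Nat.cast_pos.2 (2*m).factorial_pos
  have h4 : (0:ℝ) < (4:ℝ)^m := by positivity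
  rw [bessel_term_eq ν y hy m,
    show ((y/2) ^ ν / Real.Gamma (ν+1)) * (y^(2*m) / (2*m).factorial)
      = (y^(2*m) / ((2*m).factorial * Real.Gamma (ν+1))) * (y/2) ^ ν by ring]
  apply mul_le_mul_of_nonneg_right _ (Real.rpow_nonneg (by linarith : (0:ℝ) ≤ y/2) ν)
  · rw [div_le_div_iff₀ (by positivity) (by positivity)]
    have key := gamma_fact_bound ν hν m
    have hynn : 0 ≤ y^(2*m) := by positivity
    calc y^(2*m) * ((2*m).factorial * Real.Gamma (ν+1))
        = y^(2*m) * (Real.Gamma (ν+1) * ((2*m).factorial / (4^m * m.factorial)) * (4^m * m.factorial)) := by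
          field_simp
      _ ≤ y^(2*m) * (Real.Gamma ((m:ℝ)+ν+1) * (4^m * m.factorial)) := by
          apply mul_le_mul_of_nonneg_left _ hynn
          apply mul_le_mul_of_nonneg_right key (by positivity)
      _ = y^(2*m) * (4^m * m.factorial * Real.Gamma ((m:ℝ)+ν+1)) := by ring

lemma besselI_summable (ν y : ℝ) (hν : -(1/2) ≤ ν) (hy : 0 < y) :
    Summable (fun m : ℕ => (1 / ((m.factorial : ℝ) * Real.Gamma ((m : ℝ) + ν + 1))) *
      (y / 2) ^ (2 * (m : ℝ) + ν)) := by
  have hGν : 0 < Real.Gamma (ν+1) := Real.Gamma_pos_of_pos (by linarith)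
  refine Summable.of_nonneg_of_le (besselI_pos_terms ν y hν hy) (fun m => ?_)
    ((Real.summable_pow_div_factorial (y^2)).mul_left ((y/2)^ν / Real.Gamma (ν+1)))
  refine le_trans (bessel_term_le ν y hν hy m) ?_
  apply mul_le_mul_of_nonneg_left _ (by positivity)
  rw [pow_mul, div_le_div_iff₀ (by positivity) (by positivity)]
  apply mul_le_mul_of_nonneg_left _ (by positivity)
  exact_mod_cast Nat.factorial_le (by omega : m ≤ 2*m)

lemma besselI_ge (ν y : ℝ) (hν : -(1/2) ≤ ν) (hy : 0 < y) :
    (y/2) ^ ν / Real.Gamma (ν+1) ≤ besselI ν y := by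
  have h0 : (1 / (((0:ℕ).factorial : ℝ) * Real.Gamma (((0:ℕ) : ℝ) + ν + 1))) *
      (y / 2) ^ (2 * ((0:ℕ) : ℝ) + ν) = (y/2) ^ ν / Real.Gamma (ν+1) := by
    norm_num
    ring
  rw [besselI, ← h0]
  exact Summable.le_tsum (besselI_summable ν y hν hy) 0 (fun j _ => besselI_pos_terms ν y hν hy j)

lemma besselI_le (ν y : ℝ) (hν : -(1/2) ≤ ν) (hy : 0 < y) :
    besselI ν y ≤ (y/2) ^ ν * Real.exp y / Real.Gamma (ν+1) := by
  have hGν : 0 < Real.Gamma (ν+1) := Real.Gamma_pos_of_pos (by linarith)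
  have hg : Summable (fun n : ℕ => ((y/2)^ν / Real.Gamma (ν+1)) * (y^n / n.factorial)) :=
    (Real.summable_pow_div_factorial y).mul_left _
  have key : besselI ν y ≤ ∑' n : ℕ, ((y/2)^ν / Real.Gamma (ν+1)) * (y^n / n.factorial) := by
    rw [besselI]
    apply (besselI_summable ν y hν hy).tsum_le_tsum_of_inj (fun m => 2*m) (fun a b h => by simp only at h; omega)
      (fun c _ => by positivity) (fun m => bessel_term_le ν y hν hy m)
      hg
  calc besselI ν y ≤ _ := key
    _ = ((y/2)^ν / Real.Gamma (ν+1)) * Real.exp y := by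
        rw [tsum_mul_left, ← real_exp_eq_tsum]
    _ = (y/2) ^ ν * Real.exp y / Real.Gamma (ν+1) := by ring

theorem ncChiSqPDF_bounds (k lam : ℝ) (hk : 1 < k) (hlam : 0 < lam) :
    ∀ x : ℝ, 0 < x →
      (1 / 2 ^ (k / 2)) * Real.exp (-(x + lam) / 2) * x ^ (k / 2 - 1) / Real.Gamma (k / 2)
        ≤ ncChiSqPDF k lam x ∧
      ncChiSqPDF k lam x ≤
        (1 / 2 ^ (k / 2)) * Real.exp (-x / 4 + lam / 2) * x ^ (k / 2 - 1) /
          Real.Gamma (k / 2) := by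
  intro x hx
  have hlx : 0 < lam * x := mul_pos hlam hx
  set y := Real.sqrt (lam * x) with hydef
  have hy : 0 < y := Real.sqrt_pos.2 hlx
  have hν : -(1/2 : ℝ) ≤ k/2 - 1 := by linarith
  have hΓpos : 0 < Real.Gamma (k/2) := Real.Gamma_pos_of_pos (by linarith)
  have hΓeq : Real.Gamma (k/2 - 1 + 1) = Real.Gamma (k/2) := by ring_nf
  have h2 : (2:ℝ) ^ (k/2) = 2 * 2 ^ (k/2 - 1) := by
    rw [← Real.rpow_one_add' (by norm_num) (by intro h; linarith [h] : (1:ℝ) + (k/2-1) ≠ 0)]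
    ring_nf
  have h2pos : (0:ℝ) < 2 ^ (k/2 - 1) := Real.rpow_pos_of_pos (by norm_num) _
  have h2pos' : (0:ℝ) < 2 ^ (k/2) := Real.rpow_pos_of_pos (by norm_num) _
  have hxpow : 0 < x ^ (k/2 - 1) := Real.rpow_pos_of_pos hx _
  have hppos : 0 < (x/lam) ^ (k/4 - 1/2) := Real.rpow_pos_of_pos (by positivity) _
  have halg : (x/lam) ^ (k/4 - 1/2) * (y/2) ^ (k/2 - 1) = x ^ (k/2-1) / 2 ^ (k/2-1) := by
    have h1 : y / 2 = (lam*x) ^ ((1:ℝ)/2) / 2 := by rw [hydef, Real.sqrt_eq_rpow]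
    rw [h1, Real.div_rpow (Real.rpow_nonneg hlx.le _) (by norm_num)]
    rw [← mul_div_assoc]
    congr 1
    rw [← Real.rpow_mul hlx.le, show (1:ℝ)/2 * (k/2-1) = k/4 - 1/2 by ring,
      ← Real.mul_rpow (div_nonneg hx.le hlam.le) hlx.le,
      show x/lam * (lam*x) = x^2 by field_simp,
      ← Real.rpow_natCast x 2, ← Real.rpow_mul hx.le]
    norm_num
    ring_nf
  have hb_lo := besselI_ge (k/2-1) y hν hy
  have hb_hi := besselI_le (k/2-1) y hν hy
  rw [hΓeq] at hb_lo hb_hi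
  constructor
  · have e1 : (1 / 2 ^ (k/2)) * Real.exp (-(x+lam)/2) * x ^ (k/2-1) / Real.Gamma (k/2)
        = 1/2 * Real.exp (-(x+lam)/2) * (x/lam) ^ (k/4 - 1/2) *
          ((y/2) ^ (k/2-1) / Real.Gamma (k/2)) := by
      rw [show 1/2 * Real.exp (-(x+lam)/2) * (x/lam) ^ (k/4-1/2) *
            ((y/2) ^ (k/2-1) / Real.Gamma (k/2))
          = 1/2 * Real.exp (-(x+lam)/2) * ((x/lam) ^ (k/4-1/2) * (y/2) ^ (k/2-1)) /
            Real.Gamma (k/2) by ring, halg, h2]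
      field_simp
    rw [e1]
    unfold ncChiSqPDF
    exact mul_le_mul_of_nonneg_left hb_lo (by positivity)
  · have hyle : y ≤ x/4 + lam := by
      rw [hydef, show x/4 + lam = Real.sqrt ((x/4 + lam)^2) by
        rw [Real.sqrt_sq (by positivity)]]
      apply Real.sqrt_le_sqrt
      nlinarith [sq_nonneg (x/4 - lam)]
    have e2 : 1/2 * Real.exp (-(x+lam)/2) * (x/lam) ^ (k/4 - 1/2) *
          ((y/2) ^ (k/2-1) * Real.exp y / Real.Gamma (k/2))
        = (1 / 2 ^ (k/2)) * Real.exp (-(x+lam)/2 + y) * x ^ (k/2-1) / Real.Gamma (k/2) := by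
      rw [Real.exp_add,
        show 1/2 * Real.exp (-(x+lam)/2) * (x/lam) ^ (k/4-1/2) *
            ((y/2) ^ (k/2-1) * Real.exp y / Real.Gamma (k/2))
          = 1/2 * (Real.exp (-(x+lam)/2) * Real.exp y) *
            ((x/lam) ^ (k/4-1/2) * (y/2) ^ (k/2-1)) / Real.Gamma (k/2) by ring,
        halg, h2]
      field_simp
    calc ncChiSqPDF k lam x
        ≤ 1/2 * Real.exp (-(x+lam)/2) * (x/lam) ^ (k/4 - 1/2) *
            ((y/2) ^ (k/2-1) * Real.exp y / Real.Gamma (k/2)) := by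
          unfold ncChiSqPDF
          exact mul_le_mul_of_nonneg_left hb_hi (by positivity)
      _ = (1 / 2 ^ (k/2)) * Real.exp (-(x+lam)/2 + y) * x ^ (k/2-1) / Real.Gamma (k/2) := e2
      _ ≤ (1 / 2 ^ (k/2)) * Real.exp (-x/4 + lam/2) * x ^ (k/2-1) / Real.Gamma (k/2) := by
          have hexp : Real.exp (-(x+lam)/2 + y) ≤ Real.exp (-x/4 + lam/2) :=
            Real.exp_le_exp.2 (by linarith)
          have hnum : (1 / 2 ^ (k/2)) * Real.exp (-(x+lam)/2 + y) * x ^ (k/2-1)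
              ≤ (1 / 2 ^ (k/2)) * Real.exp (-x/4 + lam/2) * x ^ (k/2-1) := by
            apply mul_le_mul_of_nonneg_right _ hxpow.le
            exact mul_le_mul_of_nonneg_left hexp (by positivity)
          exact (div_le_div_iff_of_pos_right hΓpos).2 hnum
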